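/- Let N be a finite simple and cosimple matroid with an exact k-separation (A, B). Let M be a finite simple and cosimple matroid with distinct elements e, f ∈ E(M) \ E(N) such that M \ e / f = N. If λ_{M/f}(A ∪ {e}) = k − 1 and λ_{M\e}(A ∪ {f}) = k − 1, then λ_M(A ∪ {e, f}) = k − 1. -/

import Mathlib

open Set

namespace SeymourDecomp

variable {α : Type*}

/-- The rank of a set `X` in a (finite) matroid `M`: the largest cardinality of an
independent subset of `X`. -/
noncomputable def rk (M : Matroid α) (X : Set α) : ℕ :=
  sSup {n | ∃ I, M.Indep I ∧ I ⊆ X ∧ I.ncard = n}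

/-- The connectivity function `λ_M(X) = r(X) + r(E − X) − r(M)` (integer-valued). -/
noncomputable def lam (M : Matroid α) (X : Set α) : ℤ :=
  (rk M X : ℤ) + (rk M (M.E \ X) : ℤ) - (rk M M.E : ℤ)

/-- A circuit: a minimal dependent set. -/
def IsCircuit (M : Matroid α) (C : Set α) : Prop :=
  M.Dep C ∧ ∀ D, D ⊂ C → M.Indep D

/-- A cocircuit: a circuit of the dual matroid. -/
def IsCocircuit (M : Matroid α) (C : Set α) : Prop :=
  IsCircuit M✶ C

/-- A loop: a one-element circuit. -/
def IsLoop (M : Matroid α) (e : α) : Prop := IsCircuit M {e}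

/-- A coloop: a one-element cocircuit. -/
def IsColoop (M : Matroid α) (e : α) : Prop := IsCocircuit M {e}

/-- A matroid is simple if it has no loops and no 2-element circuits,
i.e. every circuit has at least 3 elements. -/
def Simple (M : Matroid α) : Prop := ∀ C, IsCircuit M C → 3 ≤ C.ncard

/-- A matroid is cosimple if its dual is simple. -/
def Cosimple (M : Matroid α) : Prop := Simple M✶

/-- Deletion of a set of elements. -/
def delete (M : Matroid α) (D : Set α) : Matroid α := M.restrict (M.E \ D)

/-- Contraction of a set of elements: `M / C = (M✶ \ C)✶`. -/
def contract (M : Matroid α) (C : Set α) : Matroid α := (delete M✶ C)✶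

/-- `N` is a minor of `M` if it is obtained from `M` by contracting a set and
deleting a disjoint set. -/
def IsMinor (N M : Matroid α) : Prop :=
  ∃ C D : Set α, C ⊆ M.E ∧ D ⊆ M.E ∧ Disjoint C D ∧ N = delete (contract M C) D

/-- `(A, B)` is a `k`-separation of `M`. -/
def KSep (M : Matroid α) (k : ℕ) (A B : Set α) : Prop :=
  A ∪ B = M.E ∧ Disjoint A B ∧ k ≤ A.ncard ∧ k ≤ B.ncard ∧ lam M A ≤ (k : ℤ) - 1

/-- `(A, B)` is an exact `k`-separation of `M`. -/
def ExactKSep (M : Matroid α) (k : ℕ) (A B : Set α) : Prop :=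
  A ∪ B = M.E ∧ Disjoint A B ∧ k ≤ A.ncard ∧ k ≤ B.ncard ∧ lam M A = (k : ℤ) - 1

/-- For `n ≥ 2`, `M` is `n`-connected if it has no `k`-separation for `k ≤ n − 1`. -/
def NConnected (M : Matroid α) (n : ℕ) : Prop :=
  ∀ k, 1 ≤ k → k ≤ n - 1 → ∀ A B : Set α, ¬ KSep M k A B

/-- A triangle: a 3-element circuit. -/
def Triangle (M : Matroid α) (T : Set α) : Prop := IsCircuit M T ∧ T.ncard = 3

/-- A triad: a 3-element cocircuit. -/
def Triad (M : Matroid α) (T : Set α) : Prop := IsCocircuit M T ∧ T.ncard = 3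

/-- Two matroids on the same ground type are isomorphic if there is a bijection
between their ground sets preserving independence. -/
def Iso (M N : Matroid α) : Prop :=
  ∃ φ : α → α, Set.BijOn φ M.E N.E ∧ ∀ I, I ⊆ M.E → (M.Indep I ↔ N.Indep (φ '' I))

/-- A class of matroids closed under minors. -/
def MinorClosed (𝓜 : Set (Matroid α)) : Prop :=
  ∀ M ∈ 𝓜, ∀ N : Matroid α, IsMinor N M → N ∈ 𝓜

/-- A class of matroids closed under isomorphism. -/
def IsoClosed (𝓜 : Set (Matroid α)) : Prop :=
  ∀ M ∈ 𝓜, ∀ N : Matroid α, Iso M N → N ∈ 𝓜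


/-! ### Auxiliary rank lemmas -/

lemma rk_bddAbove (M : Matroid α) (hM : M.E.Finite) (X : Set α) :
    BddAbove {n | ∃ I, M.Indep I ∧ I ⊆ X ∧ I.ncard = n} :=
  ⟨M.E.ncard, fun n ⟨I, hI, _, hn⟩ => hn ▸ Set.ncard_le_ncard hI.subset_ground hM⟩

lemma le_rk {M : Matroid α} (hM : M.E.Finite) {I X : Set α} (hI : M.Indep I) (hIX : I ⊆ X) :
    I.ncard ≤ rk M X :=
  le_csSup (rk_bddAbove M hM X) ⟨I, hI, hIX, rfl⟩

lemma rk_le {M : Matroid α} {X : Set α} {n : ℕ}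
    (h : ∀ I, M.Indep I → I ⊆ X → I.ncard ≤ n) : rk M X ≤ n :=
  csSup_le ⟨0, ∅, M.empty_indep, Set.empty_subset X, Set.ncard_empty α⟩
    (fun m ⟨I, hI, hIX, hm⟩ => hm ▸ h I hI hIX)

lemma rk_basis' {M : Matroid α} (hM : M.E.Finite) {I X : Set α} (hI : M.IsBasis' I X) :
    rk M X = I.ncard := by
  refine le_antisymm (rk_le fun J hJ hJX => ?_) (le_rk hM hI.indep hI.subset)
  obtain ⟨I', hI', hJI'⟩ := hJ.subset_isBasis'_of_subset hJX
  have hcard : I'.ncard = I.ncard := by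
    rw [Set.ncard_def, Set.ncard_def, hI'.encard_eq_encard hI]
  exact hcard ▸ Set.ncard_le_ncard hJI' (hM.subset hI'.indep.subset_ground)

lemma rk_mono {M : Matroid α} (hM : M.E.Finite) {X Y : Set α} (hXY : X ⊆ Y) :
    rk M X ≤ rk M Y :=
  rk_le fun I hI hIX => le_rk hM hI (hIX.trans hXY)

lemma rk_restrict (M : Matroid α) (R X : Set α) : rk (M.restrict R) X = rk M (X ∩ R) := by
  unfold rk
  congr 1
  ext n
  constructor
  · rintro ⟨I, hI, hIX, rfl⟩
    exact ⟨I, (Matroid.restrict_indep_iff.1 hI).1,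
      Set.subset_inter hIX (Matroid.restrict_indep_iff.1 hI).2, rfl⟩
  · rintro ⟨I, hI, hIX, rfl⟩
    exact ⟨I, Matroid.restrict_indep_iff.2 ⟨hI, hIX.trans Set.inter_subset_right⟩,
      hIX.trans Set.inter_subset_left, rfl⟩

lemma rk_singleton {M : Matroid α} (hM : M.E.Finite) {x : α} (hx : M.Indep {x}) :
    rk M {x} = 1 := by
  rw [rk_basis' hM hx.isBasis_self.isBasis', Set.ncard_singleton]

lemma rk_dual_add (M : Matroid α) (hM : M.E.Finite) {X : Set α} (hX : X ⊆ M.E) :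
    rk M✶ X + rk M M.E = X.ncard + rk M (M.E \ X) := by
  have hXfin : X.Finite := hM.subset hX
  obtain ⟨I, hI⟩ := M.exists_isBasis (M.E \ X) Set.diff_subset
  obtain ⟨B, hB, hIB⟩ := hI.indep.exists_isBase_superset
  have hBE : B ⊆ M.E := hB.subset_ground
  have hBfin : B.Finite := hM.subset hBE
  have hIeq : I = B ∩ (M.E \ X) :=
    hI.eq_of_subset_indep (hB.indep.subset Set.inter_subset_left)
      (Set.subset_inter hIB hI.subset) Set.inter_subset_right
  have hIeq' : I = B \ X := by
    rw [hIeq]; ext x; simp only [Set.mem_inter_iff, Set.mem_diff]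
    exact ⟨fun h => ⟨h.1, h.2.2⟩, fun h => ⟨h.1, hBE h.1, h.2⟩⟩
  -- cardinalities
  have hBsplit : (B ∩ X).ncard + (B \ X).ncard = B.ncard :=
    Set.ncard_inter_add_ncard_diff_eq_ncard B X hBfin
  have hXsplit : (X ∩ B).ncard + (X \ B).ncard = X.ncard :=
    Set.ncard_inter_add_ncard_diff_eq_ncard X B hXfin
  have hXB : (X ∩ B).ncard = (B ∩ X).ncard := by rw [Set.inter_comm]
  have hrE : rk M M.E = B.ncard := rk_basis' hM hB.isBasis_ground.isBasis'
  have hrD : rk M (M.E \ X) = I.ncard := rk_basis' hM hI.isBasis'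
  -- the dual rank
  have hdual : rk M✶ X = (X \ B).ncard := by
    refine le_antisymm (rk_le fun J hJ hJX => ?_) ?_
    · obtain ⟨hJE, B₂, hB₂, hdj⟩ := Matroid.dual_indep_iff_exists'.1 hJ
      have hB₂fin : B₂.Finite := hM.subset hB₂.subset_ground
      have h1 : (B₂ ∩ X).ncard + (B₂ \ X).ncard = B₂.ncard :=
        Set.ncard_inter_add_ncard_diff_eq_ncard B₂ X hB₂fin
      have h2 : (B₂ \ X).ncard ≤ rk M (M.E \ X) :=
        le_rk hM (hB₂.indep.subset Set.diff_subset)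
          (Set.diff_subset_diff_left hB₂.subset_ground)
      have h3 : (B₂ ∩ X).ncard ≤ (X \ J).ncard := by
        refine Set.ncard_le_ncard ?_ (hXfin.diff (t := J))
        intro x hx
        exact ⟨hx.2, fun hxJ => (hdj.ne_of_mem hxJ hx.1) rfl⟩
      have h4 : J.ncard + (X \ J).ncard = X.ncard := by
        rw [add_comm]; exact Set.ncard_diff_add_ncard_of_subset hJX hXfin
      have h5 : B₂.ncard = B.ncard := hB₂.ncard_eq_ncard_of_isBase hB
      have h6 : (B \ X).ncard = I.ncard := by rw [hIeq']
      omega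
    · refine le_rk (M := M✶) hM ?_ Set.diff_subset
      rw [Matroid.dual_indep_iff_exists' ]
      exact ⟨Set.diff_subset.trans hX, B, hB, Set.disjoint_sdiff_left⟩
  have h6 : (B \ X).ncard = I.ncard := by rw [hIeq']
  omega

lemma rk_contract (M : Matroid α) (hM : M.E.Finite) {f : α} (hf : M.Indep {f}) {X : Set α}
    (hX : X ⊆ M.E \ {f}) :
    (rk (contract M {f}) X : ℤ) = (rk M (X ∪ {f}) : ℤ) - 1 := by
  have hfE : f ∈ M.E := hf.subset_ground rfl
  have hXE : X ⊆ M.E := hX.trans Set.diff_subset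
  have hfX : f ∉ X := fun h => (hX h).2 rfl
  set E' := M.E \ {f} with hE'
  have hE'fin : E'.Finite := hM.diff (t := {f})
  have hD : delete M✶ {f} = M✶.restrict E' := rfl
  set D := M✶.restrict E' with hDdef
  have hDE : D.E = E' := rfl
  have hcon : contract M {f} = D✶ := rfl
  -- dual formula for D
  have h1 : rk D✶ X + rk D D.E = X.ncard + rk D (D.E \ X) :=
    rk_dual_add D (by rwa [hDE]) (by rwa [hDE])
  have h2 : rk D D.E = rk M✶ E' := by
    rw [hDE, rk_restrict, Set.inter_self]
  have h3 : rk D (D.E \ X) = rk M✶ (E' \ X) := by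
    rw [hDE, rk_restrict, Set.inter_eq_self_of_subset_left Set.diff_subset]
  have hMdE : M✶.E = M.E := rfl
  have h4 : rk M✶ E' + rk M M.E = E'.ncard + rk M (M.E \ E') :=
    rk_dual_add M hM Set.diff_subset
  have h5 : M.E \ E' = {f} := by
    ext x; simp only [hE', Set.mem_diff, Set.mem_singleton_iff]
    exact ⟨fun h => by_contra fun hne => h.2 ⟨h.1, hne⟩, fun h => ⟨h ▸ hfE, fun h' => h'.2 h⟩⟩
  have h6 : rk M (M.E \ E') = 1 := by rw [h5]; exact rk_singleton hM hf
  have h7 : rk M✶ (E' \ X) + rk M M.E = (E' \ X).ncard + rk M (M.E \ (E' \ X)) :=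
    rk_dual_add M hM (Set.diff_subset.trans Set.diff_subset)
  have h8 : M.E \ (E' \ X) = X ∪ {f} := by
    ext x
    simp only [hE', Set.mem_diff, Set.mem_union, Set.mem_singleton_iff]
    constructor
    · rintro ⟨hxE, hx⟩
      by_cases hxf : x = f
      · exact Or.inr hxf
      · exact Or.inl (by_contra fun hxX => hx ⟨⟨hxE, hxf⟩, hxX⟩)
    · rintro (hx | hx)
      · exact ⟨hXE hx, fun h => h.2 hx⟩
      · exact ⟨hx ▸ hfE, fun h => h.1.2 hx⟩
  have h9 : X.ncard + (E' \ X).ncard = E'.ncard := by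
    rw [add_comm]; exact Set.ncard_diff_add_ncard_of_subset hX hE'fin
  rw [h8] at h7
  rw [hcon]
  omega

lemma Simple.indep_singleton' {M : Matroid α} (h : Simple M) {x : α} (hx : x ∈ M.E) :
    M.Indep {x} := by
  by_contra hd
  have hC : IsCircuit M {x} := by
    refine ⟨⟨hd, by simpa⟩, fun D hD => ?_⟩
    rw [Set.ssubset_singleton_iff.1 hD]
    exact M.empty_indep
  have := h _ hC
  simp [Set.ncard_singleton] at this

/-- **Lemma 4.3(ii)**. If `M \ e / f = N`, `λ_{M/f}(A ∪ {e}) = k − 1` and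
`λ_{M\e}(A ∪ {f}) = k − 1`, then `λ_M(A ∪ {e, f}) = k − 1`. -/
theorem lam_union_pair_eq_of_contract_delete
    (N : Matroid α) (hNfin : N.Finite) (hNsimple : Simple N) (hNcosimple : Cosimple N)
    (k : ℕ) (hk : 1 ≤ k) (A B : Set α) (hsep : ExactKSep N k A B)
    (M : Matroid α) (hMfin : M.Finite) (hMsimple : Simple M) (hMcosimple : Cosimple M)
    (e f : α) (hef : e ≠ f) (he : e ∈ M.E \ N.E) (hf : f ∈ M.E \ N.E)
    (hN : contract (delete M {e}) {f} = N)
    (h1 : lam (contract M {f}) (A ∪ {e}) = (k : ℤ) - 1)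
    (h2 : lam (delete M {e}) (A ∪ {f}) = (k : ℤ) - 1) :
    lam M (A ∪ ({e, f} : Set α)) = (k : ℤ) - 1 := by
  obtain ⟨hAB, hdisj, hAk, hBk, hlamN⟩ := hsep
  have hE : M.E.Finite := hMfin.ground_finite
  have heE : e ∈ M.E := he.1
  have hfE : f ∈ M.E := hf.1
  have hNE : N.E = (M.E \ {e}) \ {f} := by rw [← hN]; rfl
  have hAE : A ⊆ N.E := hAB ▸ Set.subset_union_left
  have hmem : ∀ x, (x ∈ A ∨ x ∈ B) ↔ (x ∈ M.E ∧ x ≠ e ∧ x ≠ f) := by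
    intro x
    rw [← Set.mem_union, hAB, hNE]
    simp only [Set.mem_diff, Set.mem_singleton_iff]
    tauto
  have hmemA : ∀ x, x ∈ A → x ∈ M.E ∧ x ≠ e ∧ x ≠ f := fun x hx => (hmem x).1 (Or.inl hx)
  have hmemB : ∀ x, x ∈ B ↔ (x ∈ M.E ∧ x ≠ e ∧ x ≠ f ∧ x ∉ A) := by
    intro x
    constructor
    · intro hx
      obtain ⟨h1, h2, h3⟩ := (hmem x).1 (Or.inr hx)
      exact ⟨h1, h2, h3, fun hxA => (hdisj.ne_of_mem hxA hx) rfl⟩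
    · rintro ⟨h1, h2, h3, h4⟩
      rcases (hmem x).2 ⟨h1, h2, h3⟩ with h | h
      · exact absurd h h4
      · exact h
  -- set identities
  have S1 : M.E \ (A ∪ ({e, f} : Set α)) = B := by
    ext x
    simp only [Set.mem_diff, Set.mem_union, Set.mem_insert_iff, Set.mem_singleton_iff, hmemB x]
    tauto
  have S2 : (M.E \ {e}) \ (A ∪ {f}) = B := by
    ext x
    simp only [Set.mem_diff, Set.mem_union, Set.mem_singleton_iff, hmemB x]
    tauto
  have S3 : (M.E \ {f}) \ (A ∪ {e}) = B := by
    ext x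
    simp only [Set.mem_diff, Set.mem_union, Set.mem_singleton_iff, hmemB x]
    tauto
  have S4 : ((M.E \ {e}) \ {f}) \ A = B := by
    ext x
    simp only [Set.mem_diff, Set.mem_singleton_iff, hmemB x]
    tauto
  have S6 : ((M.E \ {e}) \ {f}) ∪ {f} = M.E \ {e} := by
    ext x
    simp only [Set.mem_diff, Set.mem_union, Set.mem_singleton_iff]
    constructor
    · rintro (h | rfl)
      · exact h.1
      · exact ⟨hfE, fun h => hef (h.symm)⟩
    · intro h
      by_cases hxf : x = f
      · exact Or.inr hxf
      · exact Or.inl ⟨h, hxf⟩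
  have hAef : A ∪ {e} ∪ {f} = A ∪ ({e, f} : Set α) := by
    ext x
    simp only [Set.mem_union, Set.mem_insert_iff, Set.mem_singleton_iff]
    tauto
  -- simple/cosimple consequences
  have hfI : M.Indep {f} := Simple.indep_singleton' hMsimple hfE
  have heDual : M✶.Indep {e} := Simple.indep_singleton' hMcosimple heE
  obtain ⟨-, B₀, hB₀, hdj⟩ := Matroid.dual_indep_iff_exists'.1 heDual
  have hrE1 : rk M (M.E \ {e}) = rk M M.E := by
    refine le_antisymm (rk_mono hE Set.diff_subset) ?_
    rw [rk_basis' hE hB₀.isBasis_ground.isBasis']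
    exact le_rk hE hB₀.indep
      (Set.subset_diff_singleton hB₀.subset_ground (Set.disjoint_singleton_left.1 hdj))
  -- subsets
  have hsubAf : A ∪ {f} ⊆ M.E \ {e} := by
    rintro x (hx | rfl)
    · exact ⟨(hmemA x hx).1, (hmemA x hx).2.1⟩
    · exact ⟨hfE, fun h => hef h.symm⟩
  have hsubBf : B ∪ {f} ⊆ M.E \ {e} := by
    rintro x (hx | rfl)
    · obtain ⟨h1, h2, -, -⟩ := (hmemB x).1 hx
      exact ⟨h1, h2⟩
    · exact ⟨hfE, fun h => hef h.symm⟩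
  have hsubAe : A ∪ {e} ⊆ M.E \ {f} := by
    rintro x (hx | rfl)
    · exact ⟨(hmemA x hx).1, (hmemA x hx).2.2⟩
    · exact ⟨heE, hef⟩
  have hsubB : B ⊆ M.E \ {f} := by
    intro x hx
    obtain ⟨h1, -, h3, -⟩ := (hmemB x).1 hx
    exact ⟨h1, h3⟩
  have hsubANf : A ⊆ (M.E \ {e}) \ {f} := hNE ▸ hAE
  have hsubBNf : B ⊆ (M.E \ {e}) \ {f} := by
    intro x hx
    obtain ⟨h1, h2, h3, -⟩ := (hmemB x).1 hx
    exact ⟨⟨h1, h2⟩, h3⟩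
  -- rewrite h2 (the deletion hypothesis)
  have hMdE : (delete M {e}).E = M.E \ {e} := rfl
  have hMdr : delete M {e} = M.restrict (M.E \ {e}) := rfl
  rw [lam, hMdE, hMdr, rk_restrict, rk_restrict, rk_restrict, Set.inter_self,
    Set.inter_eq_self_of_subset_left hsubAf, S2,
    Set.inter_eq_self_of_subset_left (hsubBNf.trans Set.diff_subset), hrE1] at h2
  -- rewrite h1 (the contraction hypothesis)
  have hMcE : (contract M {f}).E = M.E \ {f} := rfl
  have c1 := rk_contract M hE hfI hsubAe
  have c2 := rk_contract M hE hfI hsubB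
  have c3 := rk_contract M hE hfI (X := M.E \ {f}) subset_rfl
  rw [Set.diff_union_of_subset (Set.singleton_subset_iff.2 hfE)] at c3
  rw [hAef] at c1
  rw [lam, hMcE, S3, c1, c2, c3] at h1
  -- rewrite hlamN
  have hMd2E : (contract (delete M {e}) {f}).E = (M.E \ {e}) \ {f} := rfl
  have hEd : (delete M {e}).E.Finite := hE.diff (t := {e})
  have hfMd : (delete M {e}).Indep {f} :=
    Matroid.restrict_indep_iff.2 ⟨hfI, Set.singleton_subset_iff.2 ⟨hfE, fun h => hef h.symm⟩⟩
  have c4 := rk_contract (delete M {e}) hEd hfMd hsubANf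
  have c5 := rk_contract (delete M {e}) hEd hfMd hsubBNf
  have c6 := rk_contract (delete M {e}) hEd hfMd (X := (M.E \ {e}) \ {f}) subset_rfl
  rw [S6] at c6
  rw [hMdr, rk_restrict, Set.inter_eq_self_of_subset_left hsubAf] at c4
  rw [hMdr, rk_restrict, Set.inter_eq_self_of_subset_left hsubBf] at c5
  rw [hMdr, rk_restrict, Set.inter_self, hrE1] at c6
  rw [← hN, lam, hMd2E, S4, hMdr] at hlamN
  rw [c4, c5, c6] at hlamN
  -- conclude
  rw [lam, S1]
  linarith [h1, h2, hlamN]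

end SeymourDecomp
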